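/- For n ≥ 1 and any distribution P on R with support in [-r, r], mean θ = E[X], and X̄ the sample mean of n i.i.d. draws, the shrinkage estimator θ̂ = X̄/(1+δ) with δ ≥ 0 satisfies E(θ̂ - θ)^2 = (Var(X)/n + θ^2 δ^2) / (1+δ)^2; consequently, sup over all P supported in [-r,r] of E(θ̂ - θ)^2 equals r^2/(n(1+δ)^2) if δ ≤ 1/√n and r^2 δ^2/(1+δ)^2 if δ > 1/√n. -/

import Mathlib

open MeasureTheory
open scoped ENNReal

variable {n : ℕ} {P : Measure ℝ} [IsProbabilityMeasure P]

lemma my_pi_prod (f : Fin n → ℝ → ℝ) :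
    ∫ x : Fin n → ℝ, ∏ i, f i (x i) ∂(Measure.pi fun _ => P) = ∏ i, ∫ x, f i x ∂P := by
  letI : MeasureSpace ℝ := ⟨P⟩
  exact MeasureTheory.integral_fintype_prod_eq_prod f

lemma my_pi_eval (f : ℝ → ℝ) (i : Fin n) :
    ∫ x : Fin n → ℝ, f (x i) ∂(Measure.pi fun _ => P) = ∫ x, f x ∂P := by
  have h := my_pi_prod (P := P) (fun k => if k = i then f else fun _ => 1)
  have h2 : ∀ k : Fin n, (∫ x, (if k = i then f else fun _ => (1:ℝ)) x ∂P)
      = if k = i then ∫ x, f x ∂P else 1 := by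
    intro k; split_ifs <;> simp
  rw [Finset.prod_congr rfl (fun k _ => h2 k), Finset.prod_ite_eq', if_pos (Finset.mem_univ i)] at h
  rw [← h]
  congr 1; funext x
  rw [Finset.prod_congr rfl (fun k _ => by rw [ite_apply]),
    Finset.prod_ite_eq', if_pos (Finset.mem_univ i)]

lemma my_pi_pair (f g : ℝ → ℝ) (i j : Fin n) (hij : i ≠ j) :
    ∫ x : Fin n → ℝ, f (x i) * g (x j) ∂(Measure.pi fun _ => P)
      = (∫ x, f x ∂P) * ∫ x, g x ∂P := by
  set F : Fin n → ℝ → ℝ := fun k => if k = i then f else if k = j then g else fun _ => 1 with hF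
  have h := my_pi_prod (P := P) F
  have key : ∀ G : ℝ → ℝ → ℝ,
      (∀ x y, (∏ k, G (F k x) y) = G (f x) y * G (g x) y * 1) → True := fun _ _ => trivial
  have hprod : ∀ (u : Fin n → ℝ), (∏ k, F k (u k)) = f (u i) * g (u j) := by
    intro u
    rw [← Finset.mul_prod_erase Finset.univ _ (Finset.mem_univ i),
      ← Finset.mul_prod_erase (Finset.univ.erase i) _
        (Finset.mem_erase.2 ⟨Ne.symm hij, Finset.mem_univ j⟩),
      Finset.prod_eq_one, mul_one]
    · simp [hF, Ne.symm hij]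
    · intro k hk
      have hki : k ≠ i := Finset.ne_of_mem_erase (Finset.mem_of_mem_erase hk)
      have hkj : k ≠ j := Finset.ne_of_mem_erase hk
      simp [hF, hki, hkj]
  have hint : ∀ k : Fin n, (∫ x, F k x ∂P)
      = if k = i then ∫ x, f x ∂P else if k = j then ∫ x, g x ∂P else 1 := by
    intro k; simp only [hF]; split_ifs <;> simp
  rw [Finset.prod_congr rfl (fun k _ => hint k)] at h
  have hprodr : (∏ k : Fin n, if k = i then ∫ x, f x ∂P else if k = j then ∫ x, g x ∂P else 1)
      = (∫ x, f x ∂P) * ∫ x, g x ∂P := by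
    rw [← Finset.mul_prod_erase Finset.univ _ (Finset.mem_univ i),
      ← Finset.mul_prod_erase (Finset.univ.erase i) _
        (Finset.mem_erase.2 ⟨Ne.symm hij, Finset.mem_univ j⟩),
      Finset.prod_eq_one, mul_one]
    · simp [Ne.symm hij]
    · intro k hk
      have hki : k ≠ i := Finset.ne_of_mem_erase (Finset.mem_of_mem_erase hk)
      have hkj : k ≠ j := Finset.ne_of_mem_erase hk
      simp [hki, hkj]
  rw [hprodr] at h
  rw [← h]
  exact integral_congr_ae (Filter.Eventually.of_forall fun u => (hprod u).symm)

lemma risk_formula (n : ℕ) (hn : 1 ≤ n) (r δ : ℝ) (hδ : 0 ≤ δ)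
    (P : Measure ℝ) [IsProbabilityMeasure P] (hae : ∀ᵐ x ∂P, |x| ≤ r) :
    ∫ D, ((∑ i, D i) / (n : ℝ) / (1 + δ) - ∫ x, x ∂P) ^ 2 ∂(Measure.pi fun _ : Fin n => P)
      = ((∫ x, (x - ∫ y, y ∂P) ^ 2 ∂P) / n + (∫ x, x ∂P) ^ 2 * δ ^ 2) / (1 + δ) ^ 2 := by
  set θ : ℝ := ∫ x, x ∂P with hθ
  set g : ℝ → ℝ := fun x => x - θ with hg
  set V : ℝ := ∫ x, g x ^ 2 ∂P with hV
  set μ : Measure (Fin n → ℝ) := Measure.pi fun _ : Fin n => P with hμ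
  have hne : (n : ℝ) ≠ 0 := Nat.cast_ne_zero.2 (by omega)
  have hdne : (1 : ℝ) + δ ≠ 0 := by positivity
  have hxint : Integrable (fun x : ℝ => x) P := by
    apply Integrable.mono' (integrable_const r) measurable_id.aestronglyMeasurable
    filter_upwards [hae] with x hx; simpa using hx
  have hgint : Integrable g P := hxint.sub (integrable_const θ)
  have hgzero : ∫ x, g x ∂P = 0 := by
    rw [hg]; rw [integral_sub hxint (integrable_const θ)]
    simp [hθ]
  have hgmeas : Measurable g := measurable_id.sub_const θ
  have hgbd : ∀ᵐ x ∂P, ‖g x‖ ≤ r + |θ| := by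
    filter_upwards [hae] with x hx
    calc ‖g x‖ = |x - θ| := rfl
    _ ≤ |x| + |θ| := abs_sub _ _
    _ ≤ r + |θ| := by linarith
  have hg2int : Integrable (fun x => g x ^ 2) P := by
    apply Integrable.mono' (integrable_const ((r + |θ|) ^ 2))
      (hgmeas.pow_const 2).aestronglyMeasurable
    filter_upwards [hgbd] with x hx
    have : ‖g x‖ ^ 2 ≤ (r + |θ|) ^ 2 := by
      apply pow_le_pow_left₀ (norm_nonneg _) hx
    simpa [abs_pow] using this
  have haeμ : ∀ᵐ D ∂μ, ∀ i, ‖g (D i)‖ ≤ r + |θ| := by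
    rw [hμ]
    refine Filter.eventually_all.2 fun i => ?_
    have h := (Measure.tendsto_eval_ae_ae (μ := fun _ : Fin n => P) (i := i)).eventually hgbd
    exact h.mono fun D hD => hD
  set S : (Fin n → ℝ) → ℝ := fun D => ∑ i, g (D i) with hS
  have hSmeas : Measurable S := Finset.measurable_sum _ fun i _ => hgmeas.comp (measurable_pi_apply i)
  have hterm_int : ∀ i j : Fin n, Integrable (fun D => g (D i) * g (D j)) μ := by
    intro i j
    apply Integrable.mono' (integrable_const ((r + |θ|) ^ 2))
      ((hgmeas.comp (measurable_pi_apply i)).mul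
        (hgmeas.comp (measurable_pi_apply j))).aestronglyMeasurable
    filter_upwards [haeμ] with D hD
    calc ‖g (D i) * g (D j)‖ = ‖g (D i)‖ * ‖g (D j)‖ := norm_mul _ _
    _ ≤ (r + |θ|) * (r + |θ|) := by
        apply mul_le_mul (hD i) (hD j) (norm_nonneg _)
        exact le_trans (norm_nonneg _) (hD i)
    _ = (r + |θ|) ^ 2 := (sq _).symm
  have hcoord_int : ∀ i : Fin n, Integrable (fun D => g (D i)) μ := by
    intro i
    apply Integrable.mono' (integrable_const (r + |θ|))
      (hgmeas.comp (measurable_pi_apply i)).aestronglyMeasurable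
    filter_upwards [haeμ] with D hD using hD i
  have hSint : Integrable S μ := integrable_finset_sum _ fun i _ => hcoord_int i
  have hS2int : Integrable (fun D => S D ^ 2) μ := by
    apply Integrable.mono' (integrable_const (((n : ℝ) * (r + |θ|)) ^ 2))
      (hSmeas.pow_const 2).aestronglyMeasurable
    filter_upwards [haeμ] with D hD
    have h1 : |S D| ≤ (n : ℝ) * (r + |θ|) := by
      calc |S D| ≤ ∑ i, |g (D i)| := Finset.abs_sum_le_sum_abs _ _
      _ ≤ ∑ _i : Fin n, (r + |θ|) := Finset.sum_le_sum fun i _ => hD i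
      _ = (n : ℝ) * (r + |θ|) := by simp [Finset.sum_const, nsmul_eq_mul]; ring
    have h2 : ‖S D ^ 2‖ = |S D| ^ 2 := by rw [Real.norm_eq_abs, abs_pow, sq_abs, ← sq_abs]
    rw [h2]
    exact pow_le_pow_left₀ (abs_nonneg _) h1 2
  have hScoord : ∫ D, S D ∂μ = 0 := by
    rw [hS, integral_finset_sum _ fun i _ => hcoord_int i]
    have : ∀ i : Fin n, ∫ D, g (D i) ∂μ = 0 := fun i => by
      rw [hμ, my_pi_eval g i, hgzero]
    simp [this]
  have hS2 : ∫ D, S D ^ 2 ∂μ = n * V := by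
    have hsq : ∀ D, S D ^ 2 = ∑ i, ∑ j, g (D i) * g (D j) := by
      intro D; rw [hS, sq, Finset.sum_mul_sum]
    rw [integral_congr_ae (Filter.Eventually.of_forall fun D => hsq D)]
    rw [integral_finset_sum _ fun i _ => integrable_finset_sum _ fun j _ => hterm_int i j]
    have hterm : ∀ i j : Fin n, ∫ D, g (D i) * g (D j) ∂μ = if i = j then V else 0 := by
      intro i j
      by_cases h : i = j
      · subst h
        rw [if_pos rfl, hμ, my_pi_eval (fun x => g x * g x) i]
        simp only [hV, ← sq]
      · rw [if_neg h, hμ, my_pi_pair g g i j h, hgzero, mul_zero]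
    have hrow : ∀ i : Fin n, ∑ j, ∫ D, g (D i) * g (D j) ∂μ = V := by
      intro i
      rw [Finset.sum_congr rfl fun j _ => hterm i j]
      simp
    rw [Finset.sum_congr rfl fun i _ => integral_finset_sum _ (fun j _ => hterm_int i j)]
    rw [Finset.sum_congr rfl fun i _ => hrow i]
    simp [Finset.sum_const, nsmul_eq_mul]
  have hkey : ∀ D : Fin n → ℝ,
      (∑ i, D i) / (n : ℝ) / (1 + δ) - θ = (S D - (n : ℝ) * θ * δ) / ((n : ℝ) * (1 + δ)) := by
    intro D
    have hSD : S D = (∑ i, D i) - (n : ℝ) * θ := by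
      rw [hS]
      simp only [hg, Finset.sum_sub_distrib, Finset.sum_const, Finset.card_univ, Fintype.card_fin,
        nsmul_eq_mul]
    rw [hSD]
    field_simp
    ring
  have hstep : (∫ D, ((∑ i, D i) / (n : ℝ) / (1 + δ) - θ) ^ 2 ∂μ)
      = (∫ D, (S D - (n : ℝ) * θ * δ) ^ 2 ∂μ) / ((n : ℝ) * (1 + δ)) ^ 2 := by
    rw [← integral_div]
    congr 1
    funext D
    rw [hkey D, div_pow]
  rw [hstep]
  set c : ℝ := (n : ℝ) * θ * δ with hc
  have hexp : ∀ D : Fin n → ℝ, (S D - c) ^ 2 = S D ^ 2 - (2 * c) * S D + c ^ 2 := by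
    intro D; ring
  have hintval : ∫ D, (S D - c) ^ 2 ∂μ = (n : ℝ) * V + c ^ 2 := by
    rw [integral_congr_ae (Filter.Eventually.of_forall hexp)]
    have h1 : Integrable (fun D => S D ^ 2 - 2 * c * S D) μ := hS2int.sub (hSint.const_mul (2 * c))
    have h2 : Integrable (fun _ : Fin n → ℝ => c ^ 2) μ := integrable_const _
    have e1 : ∫ D, (S D ^ 2 - 2 * c * S D + c ^ 2) ∂μ
        = (∫ D, (S D ^ 2 - 2 * c * S D) ∂μ) + ∫ _, c ^ 2 ∂μ := integral_add h1 h2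
    have e2 : ∫ D, (S D ^ 2 - 2 * c * S D) ∂μ
        = (∫ D, S D ^ 2 ∂μ) - ∫ D, 2 * c * S D ∂μ :=
      integral_sub hS2int (hSint.const_mul (2 * c))
    have e3 : ∫ D, 2 * c * S D ∂μ = 2 * c * ∫ D, S D ∂μ := integral_const_mul _ _
    rw [e1, e2, e3, hS2, hScoord]
    simp [measure_univ]
  rw [hintval, hc]
  field_simp

lemma var_add_sq_le (r : ℝ) (P : Measure ℝ) [IsProbabilityMeasure P]
    (hae : ∀ᵐ x ∂P, |x| ≤ r) :
    (∫ x, (x - ∫ y, y ∂P) ^ 2 ∂P) + (∫ x, x ∂P) ^ 2 ≤ r ^ 2 := by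
  set θ : ℝ := ∫ x, x ∂P with hθ
  have hxint : Integrable (fun x : ℝ => x) P := by
    apply Integrable.mono' (integrable_const r) measurable_id.aestronglyMeasurable
    filter_upwards [hae] with x hx; simpa using hx
  have hx2int : Integrable (fun x : ℝ => x ^ 2) P := by
    apply Integrable.mono' (integrable_const (r ^ 2))
      (measurable_id.pow_const 2).aestronglyMeasurable
    filter_upwards [hae] with x hx
    have : |x| ^ 2 ≤ r ^ 2 := pow_le_pow_left₀ (abs_nonneg _) hx 2
    calc ‖x ^ 2‖ = |x| ^ 2 := by rw [Real.norm_eq_abs, abs_pow, ← sq_abs, sq_abs]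
    _ ≤ r ^ 2 := this
  have hVeq : (∫ x, (x - θ) ^ 2 ∂P) = (∫ x, x ^ 2 ∂P) - θ ^ 2 := by
    have hexp : ∀ x : ℝ, (x - θ) ^ 2 = x ^ 2 - 2 * θ * x + θ ^ 2 := fun x => by ring
    rw [integral_congr_ae (Filter.Eventually.of_forall hexp)]
    have h1 : Integrable (fun x : ℝ => x ^ 2 - 2 * θ * x) P :=
      hx2int.sub (hxint.const_mul (2 * θ))
    have e1 : ∫ x, (x ^ 2 - 2 * θ * x + θ ^ 2) ∂P
        = (∫ x, (x ^ 2 - 2 * θ * x) ∂P) + ∫ _, θ ^ 2 ∂P := integral_add h1 (integrable_const _)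
    have e2 : ∫ x, (x ^ 2 - 2 * θ * x) ∂P
        = (∫ x, x ^ 2 ∂P) - ∫ x, 2 * θ * x ∂P := integral_sub hx2int (hxint.const_mul (2 * θ))
    have e3 : ∫ x, 2 * θ * x ∂P = 2 * θ * ∫ x, x ∂P := integral_const_mul _ _
    rw [e1, e2, e3, ← hθ]
    simp [measure_univ]
    ring
  have hx2le : (∫ x, x ^ 2 ∂P) ≤ r ^ 2 := by
    have : (∫ x, x ^ 2 ∂P) ≤ ∫ _, r ^ 2 ∂P := by
      apply integral_mono_ae hx2int (integrable_const _)
      filter_upwards [hae] with x hx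
      rw [← sq_abs]
      exact pow_le_pow_left₀ (abs_nonneg _) hx 2
    simpa [measure_univ] using this
  rw [hVeq]
  linarith

lemma integrable_dirac' {f : ℝ → ℝ} (hf : Measurable f) (a : ℝ) :
    Integrable f (Measure.dirac a) := by
  refine Integrable.mono' (integrable_const ‖f a‖) hf.aestronglyMeasurable ?_
  simp [ae_dirac_eq]

section twopoint

variable (r : ℝ)

noncomputable def P1 (r : ℝ) : Measure ℝ :=
  (1/2 : ℝ≥0∞) • Measure.dirac (-r) + (1/2 : ℝ≥0∞) • Measure.dirac r

instance : IsProbabilityMeasure (P1 r) := by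
  constructor
  simp [P1, ENNReal.inv_two_add_inv_two]

lemma P1_ae (hr : 0 < r) : ∀ᵐ x ∂(P1 r), |x| ≤ r := by
  rw [P1, ae_add_measure_iff]
  constructor <;> apply Measure.ae_smul_measure <;> simp [ae_dirac_eq, abs_of_nonneg hr.le, hr.le]

lemma P1_integral {f : ℝ → ℝ} (hf : Measurable f) :
    ∫ x, f x ∂(P1 r) = (f (-r) + f r) / 2 := by
  rw [P1, integral_add_measure ((integrable_dirac' hf (-r)).smul_measure (by simp))
      ((integrable_dirac' hf r).smul_measure (by simp)),
    integral_smul_measure, integral_smul_measure, integral_dirac, integral_dirac]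
  have h2 : ((1:ℝ≥0∞)/2).toReal = (1:ℝ)/2 := by
    simp
  rw [h2]
  simp [smul_eq_mul]
  ring

lemma P1_mean : ∫ x, x ∂(P1 r) = 0 := by
  rw [P1_integral r (f := fun x : ℝ => x) measurable_id']; ring

lemma P1_var : ∫ x, (x - ∫ y, y ∂(P1 r)) ^ 2 ∂(P1 r) = r ^ 2 := by
  rw [P1_mean]
  rw [P1_integral r (f := fun x : ℝ => (x - 0) ^ 2) (by measurability)]
  ring

lemma P2_mean : ∫ x, x ∂(Measure.dirac r) = r := integral_dirac _ _

lemma P2_var : ∫ x, (x - ∫ y, y ∂(Measure.dirac r)) ^ 2 ∂(Measure.dirac r) = 0 := by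
  rw [P2_mean, integral_dirac]
  simp

lemma P2_ae (hr : 0 < r) : ∀ᵐ x ∂(Measure.dirac r), |x| ≤ r := by
  simp [ae_dirac_eq, abs_of_nonneg hr.le]

end twopoint


/-- Risk of the shrinkage estimator `X̄/(1+δ)` for bounded mean estimation:
exact risk formula for each `P` supported in `[-r,r]`, and the value of the
supremum of the risk over all such `P`. -/
theorem shrinkage_risk (n : ℕ) (hn : 1 ≤ n) (r δ : ℝ) (hr : 0 < r) (hδ : 0 ≤ δ) :
    (∀ P : Measure ℝ, IsProbabilityMeasure P → (∀ᵐ x ∂P, |x| ≤ r) →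
      ∫ D, ((∑ i, D i) / (n : ℝ) / (1 + δ) - ∫ x, x ∂P) ^ 2
          ∂(Measure.pi fun _ : Fin n => P)
        = ((∫ x, (x - ∫ y, y ∂P) ^ 2 ∂P) / n + (∫ x, x ∂P) ^ 2 * δ ^ 2) / (1 + δ) ^ 2)
    ∧
    sSup {e : ℝ | ∃ P : Measure ℝ, IsProbabilityMeasure P ∧ (∀ᵐ x ∂P, |x| ≤ r) ∧
        e = ∫ D, ((∑ i, D i) / (n : ℝ) / (1 + δ) - ∫ x, x ∂P) ^ 2
              ∂(Measure.pi fun _ : Fin n => P)}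
      = if δ ≤ 1 / Real.sqrt n then r ^ 2 / (n * (1 + δ) ^ 2)
        else r ^ 2 * δ ^ 2 / (1 + δ) ^ 2 := by
  have hform : ∀ P : Measure ℝ, IsProbabilityMeasure P → (∀ᵐ x ∂P, |x| ≤ r) →
      ∫ D, ((∑ i, D i) / (n : ℝ) / (1 + δ) - ∫ x, x ∂P) ^ 2
          ∂(Measure.pi fun _ : Fin n => P)
        = ((∫ x, (x - ∫ y, y ∂P) ^ 2 ∂P) / n + (∫ x, x ∂P) ^ 2 * δ ^ 2) / (1 + δ) ^ 2 := by
    intro P hP hae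
    haveI := hP
    exact risk_formula n hn r δ hδ P hae
  refine ⟨hform, ?_⟩
  have hnpos : (0 : ℝ) < n := by exact_mod_cast Nat.pos_of_ne_zero (by omega)
  have hdpos : (0 : ℝ) < 1 + δ := by linarith
  apply IsGreatest.csSup_eq
  constructor
  · -- membership
    by_cases hc : δ ≤ 1 / Real.sqrt n
    · rw [if_pos hc]
      refine ⟨P1 r, inferInstance, P1_ae r hr, ?_⟩
      rw [hform (P1 r) inferInstance (P1_ae r hr), P1_var, P1_mean]
      norm_num [div_div]
    · rw [if_neg hc]
      refine ⟨Measure.dirac r, inferInstance, P2_ae r hr, ?_⟩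
      rw [hform _ inferInstance (P2_ae r hr), P2_var, P2_mean]
      norm_num
  · rintro e ⟨P, hP, hae, rfl⟩
    haveI := hP
    rw [hform P hP hae]
    have hbd := var_add_sq_le r P hae
    have hV0 : 0 ≤ ∫ x, (x - ∫ y, y ∂P) ^ 2 ∂P := integral_nonneg fun x => sq_nonneg _
    set V : ℝ := ∫ x, (x - ∫ y, y ∂P) ^ 2 ∂P with hV
    set θ : ℝ := ∫ x, x ∂P with hθ
    by_cases hc : δ ≤ 1 / Real.sqrt n
    · rw [if_pos hc]
      have hδ2 : δ ^ 2 ≤ 1 / (n : ℝ) := by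
        have h1 : δ ^ 2 ≤ (1 / Real.sqrt n) ^ 2 := pow_le_pow_left₀ hδ hc 2
        rwa [div_pow, one_pow, Real.sq_sqrt hnpos.le] at h1
      have hnum : V / n + θ ^ 2 * δ ^ 2 ≤ r ^ 2 / n := by
        have h3 : θ ^ 2 * δ ^ 2 ≤ θ ^ 2 * (1 / n) := mul_le_mul_of_nonneg_left hδ2 (sq_nonneg θ)
        have h4 : V / n + θ ^ 2 * (1 / n) = (V + θ ^ 2) / n := by ring
        have h5 : (V + θ ^ 2) / n ≤ r ^ 2 / n := by gcongr
        linarith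
      calc (V / n + θ ^ 2 * δ ^ 2) / (1 + δ) ^ 2 ≤ (r ^ 2 / n) / (1 + δ) ^ 2 := by gcongr
      _ = r ^ 2 / (n * (1 + δ) ^ 2) := by rw [div_div]
    · rw [if_neg hc]
      have h1n : 1 / (n : ℝ) ≤ δ ^ 2 := by
        have h1 : (1 / Real.sqrt n) ^ 2 ≤ δ ^ 2 :=
          pow_le_pow_left₀ (by positivity) (le_of_lt (not_le.1 hc)) 2
        rwa [div_pow, one_pow, Real.sq_sqrt hnpos.le] at h1
      have hnum : V / n + θ ^ 2 * δ ^ 2 ≤ r ^ 2 * δ ^ 2 := by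
        have k1 : 0 ≤ (r ^ 2 - (V + θ ^ 2)) * δ ^ 2 := mul_nonneg (by linarith) (sq_nonneg δ)
        have k2 : 0 ≤ V * (δ ^ 2 - 1 / n) := mul_nonneg hV0 (by linarith)
        have h6 : V / n = V * (1 / n) := by ring
        nlinarith [k1, k2]
      gcongr
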